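/- Let G be a finite graph with at least one edge and let f : ℝ → ℝ be a non-constant, odd, real-analytic function. Then the following are equivalent: (1) 0 is the only zero of f; (2) every equilibrium x ∈ ℝ^V of ẋ_i = Σ_{j ∈ N(i)} f(x_j − x_i) satisfies x_i = x_j for every edge {i,j} of G (i.e., the only equilibrium up to translational symmetry is the zero one). -/

import Mathlib

/-- For a finite graph `G` with at least one edge and a non-constant odd
real-analytic `f`, the following are equivalent: (1) `0` is the only zero of `f`;
(2) every equilibrium `x` of `ẋ_i = ∑_{j ∈ N(i)} f(x_j − x_i)` satisfies `x_i = x_j`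
for every edge `{i,j}` (the only equilibrium up to translational symmetry is zero). -/
theorem stmt_7 {V : Type} [Fintype V] [DecidableEq V]
    (G : SimpleGraph V) [DecidableRel G.Adj] (hedge : ∃ i j : V, G.Adj i j)
    (f : ℝ → ℝ) (hodd : ∀ t : ℝ, f (-t) = -f t)
    (hnc : ∃ a b : ℝ, f a ≠ f b) (han : ∀ t : ℝ, AnalyticAt ℝ f t) :
    (∀ t : ℝ, f t = 0 → t = 0) ↔
      (∀ x : V → ℝ, (∀ i : V, ∑ j ∈ G.neighborFinset i, f (x j - x i) = 0) →
        ∀ i j : V, G.Adj i j → x i = x j) := by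
  have hf0 : f 0 = 0 := by have := hodd 0; simp at this; linarith
  constructor
  · intro hz x heq i j hij
    have hcont : Continuous f := continuous_iff_continuousAt.2 fun t => (han t).continuousAt
    have hs1 : f 1 ≠ 0 := fun h => one_ne_zero (hz 1 h)
    have hpossign : ∀ a : ℝ, 0 < a → 0 < f 1 * f a := by
      intro a ha
      rcases lt_trichotomy (f 1 * f a) 0 with h | h | h
      · exfalso
        have h0 : (0:ℝ) ∈ Set.uIcc (f 1) (f a) := by
          rcases mul_neg_iff.1 h with ⟨h1, h2⟩ | ⟨h1, h2⟩
          · exact Set.mem_uIcc.2 (Or.inr ⟨le_of_lt h2, le_of_lt h1⟩)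
          · exact Set.mem_uIcc.2 (Or.inl ⟨le_of_lt h1, le_of_lt h2⟩)
        obtain ⟨u, hu, hfu⟩ := intermediate_value_uIcc
          (hcont.continuousOn (s := Set.uIcc 1 a)) h0
        have hu0 := hz u hfu
        subst hu0
        rw [Set.mem_uIcc] at hu
        rcases hu with ⟨h1, _⟩ | ⟨_, h2⟩ <;> linarith
      · exfalso
        rcases mul_eq_zero.1 h with h | h
        · exact hs1 h
        · exact absurd (hz a h) (by linarith)
      · exact h
    have key : ∀ t : ℝ, 0 ≤ f 1 * (t * f t) := by
      intro t
      rcases lt_trichotomy t 0 with h | h | h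
      · have h1 := hpossign (-t) (by linarith)
        rw [hodd] at h1
        nlinarith
      · simp [h, hf0]
      · nlinarith [hpossign t h]
    have keyz : ∀ t : ℝ, f 1 * (t * f t) = 0 → t = 0 := by
      intro t ht
      rcases mul_eq_zero.1 ht with h | h
      · exact absurd h hs1
      · rcases mul_eq_zero.1 h with h | h
        · exact h
        · exact hz t h
    have hswap : ∀ k : V → V → ℝ,
        ∑ i, ∑ j ∈ G.neighborFinset i, k i j = ∑ i, ∑ j ∈ G.neighborFinset i, k j i := by
      intro k
      have e : ∀ m : V → V → ℝ, (∑ i, ∑ j ∈ G.neighborFinset i, m i j)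
          = ∑ i, ∑ j, if G.Adj i j then m i j else 0 := by
        intro m
        refine Finset.sum_congr rfl fun i _ => ?_
        rw [SimpleGraph.neighborFinset_eq_filter, Finset.sum_filter]
      rw [e (fun i j => k i j), e (fun i j => k j i), Finset.sum_comm]
      refine Finset.sum_congr rfl fun i _ => Finset.sum_congr rfl fun j _ => ?_
      by_cases h : G.Adj i j
      · rw [if_pos h, if_pos (G.adj_symm h)]
      · rw [if_neg h, if_neg (fun h' => h (G.adj_symm h'))]
    have S1 : ∑ i, ∑ j ∈ G.neighborFinset i, x i * f (x j - x i) = 0 := by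
      refine Finset.sum_eq_zero fun i _ => ?_
      rw [← Finset.mul_sum, heq i, mul_zero]
    have S2 : ∑ i, ∑ j ∈ G.neighborFinset i, x j * f (x j - x i) = 0 := by
      rw [hswap (fun i j => x j * f (x j - x i))]
      refine Finset.sum_eq_zero fun i _ => ?_
      have hterm : ∀ j : V, x i * f (x i - x j) = -(x i * f (x j - x i)) := by
        intro j
        rw [show x i - x j = -(x j - x i) by ring, hodd]; ring
      calc ∑ j ∈ G.neighborFinset i, x i * f (x i - x j)
          = ∑ j ∈ G.neighborFinset i, -(x i * f (x j - x i)) :=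
            Finset.sum_congr rfl fun j _ => hterm j
        _ = -(x i * ∑ j ∈ G.neighborFinset i, f (x j - x i)) := by
            rw [Finset.sum_neg_distrib, Finset.mul_sum]
        _ = 0 := by rw [heq i, mul_zero, neg_zero]
    have Stot : ∑ i, ∑ j ∈ G.neighborFinset i,
        f 1 * ((x j - x i) * f (x j - x i)) = 0 := by
      have h1 : ∑ i, ∑ j ∈ G.neighborFinset i, (x j - x i) * f (x j - x i)
          = (∑ i, ∑ j ∈ G.neighborFinset i, x j * f (x j - x i))
            - ∑ i, ∑ j ∈ G.neighborFinset i, x i * f (x j - x i) := by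
        rw [← Finset.sum_sub_distrib]
        refine Finset.sum_congr rfl fun i _ => ?_
        rw [← Finset.sum_sub_distrib]
        exact Finset.sum_congr rfl fun j _ => by ring
      have h2 : ∑ i, ∑ j ∈ G.neighborFinset i, (x j - x i) * f (x j - x i) = 0 := by
        rw [h1, S1, S2, sub_zero]
      calc ∑ i, ∑ j ∈ G.neighborFinset i, f 1 * ((x j - x i) * f (x j - x i))
          = f 1 * ∑ i, ∑ j ∈ G.neighborFinset i, (x j - x i) * f (x j - x i) := by
            rw [Finset.mul_sum]
            exact Finset.sum_congr rfl fun i _ => by rw [Finset.mul_sum]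
        _ = 0 := by rw [h2, mul_zero]
    have hinner :
        ∀ i ∈ (Finset.univ : Finset V),
          ∑ j ∈ G.neighborFinset i, f 1 * ((x j - x i) * f (x j - x i)) = 0 := by
      refine (Finset.sum_eq_zero_iff_of_nonneg ?_).1 Stot
      intro i _
      exact Finset.sum_nonneg fun j _ => key _
    have hterm0 := (Finset.sum_eq_zero_iff_of_nonneg
      (fun j _ => key (x j - x i))).1 (hinner i (Finset.mem_univ i)) j
      ((SimpleGraph.mem_neighborFinset G i j).2 hij)
    have := keyz _ hterm0
    linarith
  · intro h2 t hft
    by_contra hne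
    obtain ⟨i0, j0, hij0⟩ := hedge
    set x : V → ℝ := fun v => if v = i0 then t else 0 with hx
    have hfmt : f (-t) = 0 := by rw [hodd, hft, neg_zero]
    have heq : ∀ i, ∑ j ∈ G.neighborFinset i, f (x j - x i) = 0 := by
      intro i
      refine Finset.sum_eq_zero fun j _ => ?_
      by_cases hj : j = i0 <;> by_cases hi : i = i0 <;>
        simp [hx, hj, hi, hf0, hft, hfmt]
    have hxeq := h2 x heq i0 j0 hij0
    have hne' : j0 ≠ i0 := fun h => G.irrefl (v := i0) (h ▸ hij0)
    simp [hx, hne'] at hxeq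
    exact hne hxeq
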